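/- Let ℓ : ℕ → ℚ be defined by ℓ_0 = 0, ℓ_1 = 1, and ℓ_{n+1} = 2^{1-n} Σ_{k=0}^{n} C(n,k) ℓ_k for n ≥ 1. Then for every integer n ≥ 0, ℓ_n = n - Σ_{k=2}^{n} C(n,k) (-1)^k R_{k-2}, where R_m := Q_m · ( 1/Q_0 + 1/Q_1 + ⋯ + 1/Q_m ). -/

import Mathlib

/-- `Q m = ∏_{k=1}^{m} (1 - 2^{-k})`, with `Q 0 = 1`. -/
def Q (m : ℕ) : ℚ :=
  ∏ k ∈ Finset.range m, (1 - 1 / 2 ^ (k + 1))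

/-- `R m = Q m · (1/Q_0 + 1/Q_1 + ⋯ + 1/Q_m)`. -/
def R (m : ℕ) : ℚ :=
  Q m * ∑ j ∈ Finset.range (m + 1), 1 / Q j

lemma Q_pos (m : ℕ) : 0 < Q m := by
  apply Finset.prod_pos
  intro k _
  have h1 : (1:ℚ) < 2 ^ (k+1) := one_lt_pow₀ (by norm_num) (by omega)
  have h2 : (1:ℚ) / 2 ^ (k+1) < 1 := by
    rw [div_lt_one (by positivity)]; exact h1
  linarith

lemma R_zero : R 0 = 1 := by simp [R, Q]

lemma R_succ (m : ℕ) : R (m+1) = (1 - 1/2^(m+1)) * R m + 1 := by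
  have hQ : Q (m+1) ≠ 0 := (Q_pos (m+1)).ne'
  rw [R, Finset.sum_range_succ, mul_add, mul_one_div, div_self hQ, R]
  rw [show Q (m+1) = Q m * (1 - 1/2^(m+1)) from Finset.prod_range_succ _ _]
  ring

lemma Icc_to_range (m : ℕ) (f : ℕ → ℚ) :
    ∑ k ∈ Finset.Icc 2 (m+1), f k = ∑ i ∈ Finset.range m, f (i+2) := by
  rw [← Finset.Ico_add_one_right_eq_Icc, Finset.sum_Ico_eq_sum_range]
  refine Finset.sum_congr (by congr 1) (fun i _ => by rw [Nat.add_comm 2 i])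

lemma alt_sum (m : ℕ) :
    ∑ i ∈ Finset.range m, ((m+1).choose (i+2) : ℚ) * (-1)^i = m := by
  have h := Int.alternating_sum_range_choose_of_ne (n := m+1) (by omega)
  have hq : ∑ i ∈ Finset.range (m+2), (-1:ℚ)^i * ((m+1).choose i : ℚ) = 0 := by
    exact_mod_cast congrArg (fun z : ℤ => (z : ℚ)) h
  rw [Finset.sum_range_succ', Finset.sum_range_succ'] at hq
  have e : ∀ i, (-1:ℚ)^(i+1+1) * ((m+1).choose (i+1+1) : ℚ)
      = ((m+1).choose (i+2) : ℚ) * (-1)^i := by intro i; ring_nf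
  rw [Finset.sum_congr rfl (fun i _ => e i)] at hq
  simp [Nat.choose_one_right] at hq
  linarith

lemma sum_k_choose (m : ℕ) :
    ∑ k ∈ Finset.range (m+2), k * (m+1).choose k = (m+1) * 2^m := by
  rw [Finset.sum_range_succ']
  have e : ∀ i, (i+1) * (m+1).choose (i+1) = (m+1) * m.choose i := fun i => by
    rw [Nat.add_one_mul_choose_eq, Nat.mul_comm]
  simp only [Nat.zero_mul, Nat.add_zero]
  rw [Finset.sum_congr rfl (fun i _ => e i), ← Finset.mul_sum, Nat.sum_range_choose]

lemma choose_choose_sum (n j : ℕ) (hj : j ≤ n) :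
    ∑ k ∈ Finset.range (n+1), n.choose k * k.choose j = n.choose j * 2^(n-j) := by
  rw [Finset.range_eq_Ico, ← Finset.sum_Ico_consecutive _ (Nat.zero_le j) (by omega : j ≤ n+1)]
  have h1 : ∑ k ∈ Finset.Ico 0 j, n.choose k * k.choose j = 0 := by
    apply Finset.sum_eq_zero; intro k hk
    simp [Nat.choose_eq_zero_of_lt (Finset.mem_Ico.mp hk).2]
  rw [h1, zero_add, Finset.sum_Ico_eq_sum_range]
  have e : ∀ i ∈ Finset.range (n+1-j),
      n.choose (j+i) * (j+i).choose j = n.choose j * (n-j).choose i := by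
    intro i hi
    have hi' : j + i ≤ n := by have := Finset.mem_range.mp hi; omega
    rw [Nat.choose_mul (Nat.le_add_right j i), Nat.add_sub_cancel_left]
  rw [Finset.sum_congr rfl e, ← Finset.mul_sum]
  congr 1
  rw [show n+1-j = (n-j)+1 from by omega, Nat.sum_range_choose]

lemma key (m : ℕ) :
    2^(m+1) * ∑ i ∈ Finset.range (m+1), ((m+2).choose (i+2):ℚ) * (-1)^i * R i
      = 2^(m+1) + 2 * ∑ i ∈ Finset.range m,
          ((m+1).choose (i+2):ℚ) * (-1)^i * R i * 2^(m-1-i) := by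
  have pascal : ∀ i, ((m+2).choose (i+2) : ℚ)
      = ((m+1).choose (i+1) : ℚ) + ((m+1).choose (i+2) : ℚ) := fun i => by
    exact_mod_cast Nat.choose_succ_succ (m+1) (i+1)
  have step1 : ∑ i ∈ Finset.range (m+1), ((m+2).choose (i+2):ℚ) * (-1)^i * R i
      = ∑ i ∈ Finset.range (m+1), ((m+1).choose (i+1):ℚ) * (-1)^i * R i
        + ∑ i ∈ Finset.range (m+1), ((m+1).choose (i+2):ℚ) * (-1)^i * R i := by
    rw [← Finset.sum_add_distrib]
    exact Finset.sum_congr rfl fun i _ => by rw [pascal i]; ring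
  have step2 : ∑ i ∈ Finset.range (m+1), ((m+1).choose (i+2):ℚ) * (-1)^i * R i
      = ∑ i ∈ Finset.range m, ((m+1).choose (i+2):ℚ) * (-1)^i * R i := by
    rw [Finset.sum_range_succ]
    simp [Nat.choose_eq_zero_of_lt (show m+1 < m+2 by omega)]
  have step3 : ∑ i ∈ Finset.range (m+1), ((m+1).choose (i+1):ℚ) * (-1)^i * R i
      = (m+1 : ℚ) - ∑ i ∈ Finset.range m, ((m+1).choose (i+2):ℚ) * (-1)^i * R (i+1) := by
    rw [Finset.sum_range_succ']
    have e : ∀ i ∈ Finset.range m, ((m+1).choose (i+1+1):ℚ) * (-1)^(i+1) * R (i+1)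
        = -(((m+1).choose (i+2):ℚ) * (-1)^i * R (i+1)) := fun i _ => by ring_nf
    rw [Finset.sum_congr rfl e, Finset.sum_neg_distrib]
    simp [R_zero, Nat.choose_one_right]
    ring
  rw [step1, step2, step3]
  have point : ∀ i ∈ Finset.range m,
      2^(m+1) * (((m+1).choose (i+2):ℚ) * (-1)^i * R i)
        - 2^(m+1) * (((m+1).choose (i+2):ℚ) * (-1)^i * R (i+1))
        - 2 * (((m+1).choose (i+2):ℚ) * (-1)^i * R i * 2^(m-1-i))
      = -(2^(m+1)) * (((m+1).choose (i+2):ℚ) * (-1)^i) := by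
    intro i hi
    have hi' : i < m := Finset.mem_range.mp hi
    have h2 : (2:ℚ)^(m-1-i) * 2 * 2^(i+1) = 2^(m+1) := by
      rw [← pow_succ, ← pow_add]
      congr 1
      omega
    have hx : (2:ℚ)^(i+1) ≠ 0 := by positivity
    have hm2 : (2:ℚ)^(m-1-i) * 2^i * 2 = 2^m := by
      rw [← pow_add, ← pow_succ]
      congr 1
      omega
    rw [R_succ]
    field_simp
    linear_combination (-2 * (((m+1).choose (i+2):ℚ) * R i)) * hm2
  have hs := Finset.sum_congr rfl point
  rw [Finset.sum_sub_distrib, Finset.sum_sub_distrib, ← Finset.mul_sum, ← Finset.mul_sum,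
    ← Finset.mul_sum, ← Finset.mul_sum, alt_sum] at hs
  linear_combination hs

lemma inner_extend (m k : ℕ) (hk : k ≤ m+1) :
    ∑ j ∈ Finset.Icc 2 k, (k.choose j : ℚ) * (-1)^j * R (j-2)
      = ∑ i ∈ Finset.range m, (k.choose (i+2) : ℚ) * (-1)^i * R i := by
  have h1 : ∑ j ∈ Finset.Icc 2 (m+1), (k.choose j : ℚ) * (-1)^j * R (j-2)
      = ∑ j ∈ Finset.Icc 2 k, (k.choose j : ℚ) * (-1)^j * R (j-2) := by
    symm
    apply Finset.sum_subset (Finset.Icc_subset_Icc_right hk)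
    intro j hj hjk
    have hkj : k < j := by
      simp only [Finset.mem_Icc] at hj hjk
      omega
    simp [Nat.choose_eq_zero_of_lt hkj]
  rw [← h1, Icc_to_range]
  apply Finset.sum_congr rfl
  intro i _
  have h2 : (-1:ℚ)^(i+2) = (-1)^i := by ring
  have h3 : i + 2 - 2 = i := by omega
  rw [h2, h3]

lemma main_step (m : ℕ) (ℓ : ℕ → ℚ)
    (hℓ : ∀ k ≤ m+1, ℓ k = (k:ℚ) - ∑ j ∈ Finset.Icc 2 k, (k.choose j : ℚ) * (-1)^j * R (j-2)) :
    (2:ℚ) ^ ((1:ℤ) - ((m+1 : ℕ) : ℤ)) * ∑ k ∈ Finset.range (m+1+1), ((m+1).choose k : ℚ) * ℓ k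
      = ((m+2 : ℕ) : ℚ) - ∑ j ∈ Finset.Icc 2 (m+2), ((m+2).choose j : ℚ) * (-1)^j * R (j-2) := by
  have hterm : ∀ k ∈ Finset.range (m+2),
      ((m+1).choose k : ℚ) * ℓ k
        = ((m+1).choose k : ℚ) * k
          - ∑ i ∈ Finset.range m, ((m+1).choose k : ℚ) * ((k.choose (i+2):ℚ) * (-1)^i * R i) := by
    intro k hk
    have hk' : k ≤ m+1 := by simp only [Finset.mem_range] at hk; omega
    rw [hℓ k hk', inner_extend m k hk', mul_sub, Finset.mul_sum]
  have hA : ∑ k ∈ Finset.range (m+2), ((m+1).choose k : ℚ) * k = (m+1) * 2^m := by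
    have h := sum_k_choose m
    have h2 : ((∑ k ∈ Finset.range (m+2), k * (m+1).choose k : ℕ) : ℚ)
        = (((m+1) * 2^m : ℕ) : ℚ) := by rw [h]
    push_cast at h2
    rw [← h2]
    exact Finset.sum_congr rfl fun k _ => by ring
  have hS : ∑ k ∈ Finset.range (m+1+1), ((m+1).choose k : ℚ) * ℓ k
      = (m+1) * 2^m
        - ∑ i ∈ Finset.range m, ((m+1).choose (i+2):ℚ) * (-1)^i * R i * 2^(m-1-i) := by
    rw [Finset.sum_congr rfl hterm, Finset.sum_sub_distrib, hA]
    congr 1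
    rw [Finset.sum_comm]
    apply Finset.sum_congr rfl
    intro i hi
    have hle : i+2 ≤ m+1 := by simp only [Finset.mem_range] at hi; omega
    have hnat := choose_choose_sum (m+1) (i+2) hle
    have hq : ∑ k ∈ Finset.range (m+2), ((m+1).choose k : ℚ) * (k.choose (i+2):ℚ)
        = ((m+1).choose (i+2):ℚ) * 2^(m+1-(i+2)) := by exact_mod_cast congrArg (fun z : ℕ => (z:ℚ)) hnat
    have hsub : m+1-(i+2) = m-1-i := by omega
    have e : ∀ k ∈ Finset.range (m+2),
        ((m+1).choose k : ℚ) * ((k.choose (i+2):ℚ) * (-1)^i * R i)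
          = (((m+1).choose k : ℚ) * (k.choose (i+2):ℚ)) * ((-1)^i * R i) := fun k _ => by ring
    rw [Finset.sum_congr rfl e, ← Finset.sum_mul, hq, hsub]
    ring
  have hT : ∑ j ∈ Finset.Icc 2 (m+2), ((m+2).choose j : ℚ) * (-1)^j * R (j-2)
      = ∑ i ∈ Finset.range (m+1), ((m+2).choose (i+2):ℚ) * (-1)^i * R i := by
    rw [Icc_to_range (m+1)]
    apply Finset.sum_congr rfl
    intro i _
    have h2 : (-1:ℚ)^(i+2) = (-1)^i := by ring
    have h3 : i + 2 - 2 = i := by omega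
    rw [h2, h3]
  rw [hS, hT]
  have hz : (2:ℚ) ^ ((1:ℤ) - ((m+1 : ℕ) : ℤ)) = 2 / 2^(m+1) := by
    rw [zpow_sub₀ (by norm_num : (2:ℚ) ≠ 0), zpow_one, zpow_natCast]
  rw [hz]
  have hk := key m
  have hpow : (2:ℚ)^(m+1) ≠ 0 := by positivity
  field_simp
  ring_nf
  ring_nf at hk
  push_cast
  linarith [hk]

/-- If `ℓ 0 = 0`, `ℓ 1 = 1`, and
`ℓ (n+1) = 2^{1-n} Σ_{k=0}^{n} C(n,k) ℓ k` for `n ≥ 1`, then for every `n ≥ 0`,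
`ℓ n = n - Σ_{k=2}^{n} C(n,k) (-1)^k R_{k-2}`. -/
theorem endnodes_explicit
    (ℓ : ℕ → ℚ) (h0 : ℓ 0 = 0) (h1 : ℓ 1 = 1)
    (hrec : ∀ n : ℕ, 1 ≤ n →
      ℓ (n + 1) = (2 : ℚ) ^ ((1 : ℤ) - (n : ℤ)) *
        ∑ k ∈ Finset.range (n + 1), (n.choose k : ℚ) * ℓ k) :
    ∀ n : ℕ,
      ℓ n = (n : ℚ) -
        ∑ k ∈ Finset.Icc 2 n, (n.choose k : ℚ) * (-1 : ℚ) ^ k * R (k - 2) := by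
  intro n
  induction n using Nat.strong_induction_on with
  | _ n ih =>
    match n with
    | 0 => simpa using h0
    | 1 =>
      have : Finset.Icc 2 1 = (∅ : Finset ℕ) := by decide
      simp [this, h1]
    | (m+2) =>
      have hm : 1 ≤ m+1 := by omega
      rw [show m+2 = (m+1)+1 from rfl, hrec (m+1) hm]
      exact main_step m ℓ (fun k hk => ih k (by omega))
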